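/- Let p ≥ 5 be a prime such that q = 2p - 1 is also a prime. Then M(p; 2p-1) = 3; that is, |a_{p(2p-1)r}(k)| ≤ 3 for every prime r > 2p-1 and every integer k ≥ 0, and there exist a prime r > 2p-1 and an integer k ≥ 0 with |a_{p(2p-1)r}(k)| = 3. -/

import Mathlib

open Polynomial

/-- `cyclCoeff n k` is the coefficient of `x^k` in the `n`-th cyclotomic polynomial over `ℤ`. -/
noncomputable def cyclCoeff (n k : ℕ) : ℤ := (Polynomial.cyclotomic n ℤ).coeff k

open Finset


/-- Explicit "Lam–Leung" shaped polynomial for `Φ_{pq}` (with `q = 2p-1`), with exponents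
scaled by `r` so that `FF p q r = expand r (FF p q 1)`. -/
noncomputable def FF (p q r : ℕ) : ℤ[X] :=
  (∑ j ∈ range (p - 1), X ^ (r * (j * q)) + ∑ j ∈ range (p - 1), X ^ (r * (p + j * q)))
    - ∑ t ∈ range (2 * p - 3), X ^ (r * (1 + t * p))

lemma geom_aux (b n : ℕ) :
    (∑ j ∈ range n, (X : ℤ[X]) ^ (j * b)) * (X ^ b - 1) = X ^ (n * b) - 1 := by
  have h := geom_sum_mul ((X : ℤ[X]) ^ b) n
  rw [← pow_mul, mul_comm b n] at h
  rw [← h]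
  congr 1
  exact Finset.sum_congr rfl fun j _ => by rw [← pow_mul, mul_comm]

lemma FF_mul (m : ℕ) :
    FF (m + 5) (2 * m + 9) 1 * ((X ^ (m + 5) - 1) * (X ^ (2 * m + 9) - 1))
      = ((X : ℤ[X]) ^ ((m + 5) * (2 * m + 9)) - 1) * (X - 1) := by
  have hA := geom_aux (2 * m + 9) (m + 4)
  have hB := geom_aux (m + 5) (2 * m + 7)
  rw [FF]
  simp only [one_mul, show m + 5 - 1 = m + 4 from by omega,
    show 2 * (m + 5) - 3 = 2 * m + 7 from by omega]
  have h2 : ∑ j ∈ range (m + 4), (X : ℤ[X]) ^ ((m + 5) + j * (2 * m + 9))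
      = X ^ (m + 5) * ∑ j ∈ range (m + 4), (X : ℤ[X]) ^ (j * (2 * m + 9)) := by
    rw [Finset.mul_sum]
    exact Finset.sum_congr rfl fun j _ => by rw [← pow_add]
  have h3 : ∑ t ∈ range (2 * m + 7), (X : ℤ[X]) ^ (1 + t * (m + 5))
      = X * ∑ t ∈ range (2 * m + 7), (X : ℤ[X]) ^ (t * (m + 5)) := by
    rw [Finset.mul_sum]
    exact Finset.sum_congr rfl fun t _ => by rw [pow_add, pow_one]
  rw [h2, h3]
  linear_combination ((1 + (X : ℤ[X]) ^ (m + 5)) * (X ^ (m + 5) - 1)) * hA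
    - ((X : ℤ[X]) * (X ^ (2 * m + 9) - 1)) * hB

lemma cyclotomic_pq_mul (p q : ℕ) (hp : p.Prime) (hq : q.Prime) (hne : p ≠ q) :
    (cyclotomic (p * q) ℤ) * ((X ^ p - 1) * (X ^ q - 1))
      = ((X : ℤ[X]) ^ (p * q) - 1) * (X - 1) := by
  haveI := Fact.mk hp
  haveI := Fact.mk hq
  have hpq : ¬ p ∣ q := fun hd => hne ((Nat.prime_dvd_prime_iff_eq hp hq).mp hd)
  have h1 : (cyclotomic q ℤ) * (X - 1) = X ^ q - 1 := by
    rw [cyclotomic_prime]; exact geom_sum_mul X q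
  have h2 : expand ℤ p (cyclotomic q ℤ) = cyclotomic (q * p) ℤ * cyclotomic q ℤ :=
    cyclotomic_expand_eq_cyclotomic_mul hp hpq ℤ
  have h3 : expand ℤ p (cyclotomic q ℤ) = ∑ i ∈ range q, (X : ℤ[X]) ^ (i * p) := by
    rw [cyclotomic_prime, map_sum]
    exact Finset.sum_congr rfl fun i _ => by rw [map_pow, expand_X, ← pow_mul, mul_comm]
  have h4 : (∑ i ∈ range q, (X : ℤ[X]) ^ (i * p)) * (X ^ p - 1) = X ^ (q * p) - 1 :=
    geom_aux p q
  calc cyclotomic (p * q) ℤ * ((X ^ p - 1) * (X ^ q - 1))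
      = (cyclotomic (q * p) ℤ * cyclotomic q ℤ) * (X - 1) * (X ^ p - 1) := by
        rw [← h1, mul_comm p q]; ring
    _ = (∑ i ∈ range q, (X : ℤ[X]) ^ (i * p)) * (X ^ p - 1) * (X - 1) := by
        rw [← h2, h3]; ring
    _ = ((X : ℤ[X]) ^ (p * q) - 1) * (X - 1) := by rw [h4, mul_comm p q]

lemma X_pow_sub_one_ne_zero' {n : ℕ} (hn : 0 < n) : ((X : ℤ[X]) ^ n - 1) ≠ 0 := by
  intro h
  have hne : n ≠ 0 := by omega
  have := congrArg (fun f => Polynomial.coeff f n) h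
  simp [Polynomial.coeff_one, hne] at this

lemma phi_eq_FF (p q : ℕ) (hp : p.Prime) (hq : q.Prime) (hp5 : 5 ≤ p) (hq2 : q = 2 * p - 1) :
    cyclotomic (p * q) ℤ = FF p q 1 := by
  obtain ⟨m, rfl⟩ : ∃ m, p = m + 5 := ⟨p - 5, by omega⟩
  have hq' : q = 2 * m + 9 := by omega
  subst hq'
  have hne : (m + 5) ≠ (2 * m + 9) := by omega
  apply mul_right_cancel₀ (b := ((X : ℤ[X]) ^ (m + 5) - 1) * (X ^ (2 * m + 9) - 1))
    (mul_ne_zero (X_pow_sub_one_ne_zero' (by omega)) (X_pow_sub_one_ne_zero' (by omega)))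
  rw [cyclotomic_pq_mul _ _ hp hq hne, FF_mul]


/-- The coefficient function of the power-series inverse of `Φ_{pq}`. -/
def dd (p q m : ℕ) : ℤ :=
  if m % (p * q) < p then 1 else if q ≤ m % (p * q) ∧ m % (p * q) < q + p then -1 else 0

noncomputable def DD (p q : ℕ) : PowerSeries ℤ := PowerSeries.mk (dd p q)

def cf (p q n e : ℕ) : ℤ := if e ≤ n then dd p q (n - e) else 0

lemma DD_mul (p q : ℕ) (hp5 : 5 ≤ p) (hq2 : q = 2 * p - 1) :
    DD p q * ((1 - PowerSeries.X) * (1 - PowerSeries.X ^ (p * q)))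
      = ((1 : PowerSeries ℤ) - PowerSeries.X ^ p) * (1 - PowerSeries.X ^ q) := by
  obtain ⟨m, rfl⟩ : ∃ m, p = m + 5 := ⟨p - 5, by omega⟩
  have hq' : q = 2 * m + 9 := by omega
  subst hq'
  obtain ⟨K, hK⟩ : ∃ K, (m + 5) * (2 * m + 9) = 2 * K + 19 * m + 45 := ⟨m * m, by ring⟩
  set p := m + 5 with hp
  set q := 2 * m + 9 with hq
  set N := p * q with hN
  have hL : DD p q * ((1 - PowerSeries.X) * (1 - PowerSeries.X ^ N))
      = DD p q - DD p q * PowerSeries.X ^ 1 - DD p q * PowerSeries.X ^ N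
        + DD p q * PowerSeries.X ^ (N + 1) := by ring
  have hR : ((1 : PowerSeries ℤ) - PowerSeries.X ^ p) * (1 - PowerSeries.X ^ q)
      = 1 - PowerSeries.X ^ p - PowerSeries.X ^ q + PowerSeries.X ^ (p + q) := by
    rw [pow_add]; ring
  rw [hL, hR]
  ext n
  simp only [map_add, map_sub, PowerSeries.coeff_mul_X_pow', DD, PowerSeries.coeff_mk,
    PowerSeries.coeff_one, PowerSeries.coeff_X_pow]
  have ddlt : ∀ x, x < N → dd p q x
      = if x < p then 1 else if q ≤ x ∧ x < q + p then -1 else 0 := fun x hx => by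
    rw [dd, Nat.mod_eq_of_lt hx]
  have ddhi : ∀ x, N ≤ x → dd p q x = dd p q (x - N) := fun x hx => by
    rw [dd, dd, Nat.mod_eq_sub_mod hx]
  rcases Nat.lt_or_ge n N with h | h
  · have h4 : ¬ (N ≤ n) := by omega
    have h5 : ¬ (N + 1 ≤ n) := by omega
    rw [if_neg h4, if_neg h5, ddlt n h]
    rcases Nat.eq_zero_or_pos n with rfl | hn
    · norm_num; omega
    · rw [if_pos (show (1:ℕ) ≤ n from hn), ddlt (n - 1) (by omega)]
      split_ifs <;> omega
  · have h1 : (1:ℕ) ≤ n := by omega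
    have hne : dd p q n = dd p q (n - N) := ddhi n h
    rcases Nat.eq_or_lt_of_le h with hEq | h'
    · have hn : n = N := hEq.symm
      subst hn
      have h5 : ¬ (N + 1 ≤ N) := by omega
      rw [if_pos h1, if_pos (le_refl N), if_neg h5, hne, Nat.sub_self,
        ddlt 0 (by omega), ddlt (N - 1) (by omega)]
      clear_value N p q
      split_ifs <;> omega
    · have h5 : N + 1 ≤ n := by omega
      rw [if_pos h1, if_pos h, if_pos h5, hne, ddhi (n - 1) (by omega),
        show n - 1 - N = n - (N + 1) from by omega]
      split_ifs <;> omega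

lemma series_main (p q r : ℕ) (hp : p.Prime) (hq : q.Prime) (hp5 : 5 ≤ p)
    (hq2 : q = 2 * p - 1) (hr : r.Prime) (hrq : q < r) :
    ((cyclotomic (p * q * r) ℤ : ℤ[X]) : PowerSeries ℤ)
      = ((FF p q r : ℤ[X]) : PowerSeries ℤ) * DD p q := by
  have hpq : p < q := by omega
  have hne : p ≠ q := by omega
  have hrpq : ¬ r ∣ p * q := by
    intro hd
    rcases (Nat.Prime.dvd_mul hr).mp hd with h | h
    · exact absurd (Nat.le_of_dvd hp.pos h) (by omega)
    · exact absurd (Nat.le_of_dvd hq.pos h) (by omega)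
  have e1 : expand ℤ r (cyclotomic (p * q) ℤ) = cyclotomic (p * q * r) ℤ * cyclotomic (p * q) ℤ :=
    cyclotomic_expand_eq_cyclotomic_mul hr hrpq ℤ
  have e2 : expand ℤ r (FF p q 1) = FF p q r := by
    simp only [FF, map_sub, map_add, map_sum, map_pow, expand_X, ← pow_mul, one_mul]
  have phiFF := phi_eq_FF p q hp hq hp5 hq2
  set U : PowerSeries ℤ := (1 - PowerSeries.X) * (1 - PowerSeries.X ^ (p * q)) with hU
  set V : PowerSeries ℤ := (1 - PowerSeries.X ^ p) * (1 - PowerSeries.X ^ q) with hV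
  have hUne : U ≠ 0 := by
    intro h
    have h0 := congrArg (PowerSeries.constantCoeff (R := ℤ)) h
    have hpq0 : p * q ≠ 0 := Nat.mul_ne_zero hp.pos.ne' hq.pos.ne'
    simp [hU, map_mul, map_sub, map_pow, PowerSeries.constantCoeff_X, zero_pow hpq0] at h0
  have hphiV : ((cyclotomic (p * q) ℤ : ℤ[X]) : PowerSeries ℤ) * V = U := by
    have hpoly := congrArg (fun f : ℤ[X] => (f : PowerSeries ℤ)) (cyclotomic_pq_mul p q hp hq hne)
    simp only [Polynomial.coe_mul, Polynomial.coe_sub, Polynomial.coe_pow, Polynomial.coe_X,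
      Polynomial.coe_one] at hpoly
    rw [hU, hV]
    linear_combination hpoly
  have key : ((cyclotomic (p * q * r) ℤ : ℤ[X]) : PowerSeries ℤ) * U
      = (((FF p q r : ℤ[X]) : PowerSeries ℤ) * DD p q) * U := by
    calc ((cyclotomic (p * q * r) ℤ : ℤ[X]) : PowerSeries ℤ) * U
        = ((cyclotomic (p * q * r) ℤ : ℤ[X]) : PowerSeries ℤ)
            * (((cyclotomic (p * q) ℤ : ℤ[X]) : PowerSeries ℤ) * V) := by rw [hphiV]
      _ = ((cyclotomic (p * q * r) ℤ * cyclotomic (p * q) ℤ : ℤ[X]) : PowerSeries ℤ) * V := by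
            rw [Polynomial.coe_mul]; ring
      _ = ((expand ℤ r (cyclotomic (p * q) ℤ) : ℤ[X]) : PowerSeries ℤ) * V := by rw [e1]
      _ = ((FF p q r : ℤ[X]) : PowerSeries ℤ) * V := by rw [phiFF, e2]
      _ = ((FF p q r : ℤ[X]) : PowerSeries ℤ) * (DD p q * U) := by
            rw [DD_mul p q hp5 hq2]
      _ = (((FF p q r : ℤ[X]) : PowerSeries ℤ) * DD p q) * U := by ring
  exact mul_right_cancel₀ hUne key

lemma coeff_eq (p q r : ℕ) (hp : p.Prime) (hq : q.Prime) (hp5 : 5 ≤ p)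
    (hq2 : q = 2 * p - 1) (hr : r.Prime) (hrq : q < r) (n : ℕ) :
    cyclCoeff (p * q * r) n =
      (∑ j ∈ range (p - 1), cf p q n (r * (j * q))
        + ∑ j ∈ range (p - 1), cf p q n (r * (p + j * q)))
        - ∑ t ∈ range (2 * p - 3), cf p q n (r * (1 + t * p)) := by
  have hs := series_main p q r hp hq hp5 hq2 hr hrq
  have h0 : cyclCoeff (p * q * r) n
      = PowerSeries.coeff n (((cyclotomic (p * q * r) ℤ : ℤ[X]) : PowerSeries ℤ)) := by
    rw [Polynomial.coeff_coe]; rfl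
  rw [h0, hs]
  have hFF : ((FF p q r : ℤ[X]) : PowerSeries ℤ) * DD p q
      = (∑ j ∈ range (p - 1), DD p q * PowerSeries.X ^ (r * (j * q))
          + ∑ j ∈ range (p - 1), DD p q * PowerSeries.X ^ (r * (p + j * q)))
          - ∑ t ∈ range (2 * p - 3), DD p q * PowerSeries.X ^ (r * (1 + t * p)) := by
    rw [FF, ← Polynomial.coeToPowerSeries.ringHom_apply, map_sub, map_add, map_sum, map_sum,
      map_sum]
    simp only [map_pow, Polynomial.coeToPowerSeries.ringHom_apply, Polynomial.coe_X]
    simp only [sub_mul, add_mul, Finset.sum_mul]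
    simp [mul_comm]
  rw [hFF]
  simp only [map_add, map_sub, map_sum, PowerSeries.coeff_mul_X_pow', DD, PowerSeries.coeff_mk, cf]

lemma cf_trichotomy (p q n e : ℕ) : cf p q n e = 1 ∨ cf p q n e = 0 ∨ cf p q n e = -1 := by
  unfold cf dd; split_ifs <;> simp

lemma cf_one {p q n e : ℕ} (h : cf p q n e = 1) :
    e ≤ n ∧ 0 ≤ (n - e) % (p * q) ∧ (n - e) % (p * q) < 0 + p := by
  unfold cf dd at h
  split_ifs at h with h1 h2 h3 <;> first
    | exact ⟨h1, Nat.zero_le _, by omega⟩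
    | exact absurd h (by norm_num)

lemma cf_negone {p q n e : ℕ} (h : cf p q n e = -1) :
    e ≤ n ∧ q ≤ (n - e) % (p * q) ∧ (n - e) % (p * q) < q + p := by
  unfold cf dd at h
  split_ifs at h with h1 h2 h3 <;> first
    | exact ⟨h1, h3.1, h3.2⟩
    | exact absurd h (by norm_num)

/-- Key uniqueness: in any window `[w, w+p)` mod `pq`, at most one member of the arithmetic
progression `n - r*(a + j*b)` can land. -/
lemma uniq_gen {p q r a b s w n M : ℕ} (hbs : b * s = p * q) (hpb : p ≤ b) (hb0 : 0 < b)
    (hsr : Nat.Coprime s r) (hM : M ≤ s) {j k : ℕ}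
    (hj : j < M) (hk : k < M)
    (hej : r * (a + j * b) ≤ n) (hek : r * (a + k * b) ≤ n)
    (hwj : w ≤ (n - r * (a + j * b)) % (p * q) ∧ (n - r * (a + j * b)) % (p * q) < w + p)
    (hwk : w ≤ (n - r * (a + k * b)) % (p * q) ∧ (n - r * (a + k * b)) % (p * q) < w + p) :
    j = k := by
  have hmod : ∀ i : ℕ, (r * (a + i * b)) % b = (r * a) % b := fun i => by
    rw [mul_add, ← mul_assoc, Nat.add_mul_mod_self_right]
  have h1 : r * (a + j * b) ≡ r * (a + k * b) [MOD b] := by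
    show _ % b = _ % b; rw [hmod j, hmod k]
  have hbN : b ∣ p * q := ⟨s, hbs.symm⟩
  have a3 : (n - r * (a + j * b)) ≡ (n - r * (a + k * b)) [MOD b] := by
    rw [Nat.modEq_iff_dvd]
    have hd := h1.dvd
    have heq : ((n - r * (a + k * b) : ℕ) : ℤ) - ((n - r * (a + j * b) : ℕ) : ℤ)
        = ((r * (a + j * b) : ℕ) : ℤ) - ((r * (a + k * b) : ℕ) : ℤ) := by
      rw [Nat.cast_sub hej, Nat.cast_sub hek]; ring
    rw [heq]
    exact dvd_sub_comm.mp hd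
  have h2 : (n - r * (a + j * b)) % (p * q) ≡ (n - r * (a + k * b)) % (p * q) [MOD b] :=
    ((Nat.mod_modEq _ (p * q)).of_dvd hbN).trans
      (a3.trans ((Nat.mod_modEq _ (p * q)).of_dvd hbN).symm)
  have h3 : (n - r * (a + j * b)) % (p * q) = (n - r * (a + k * b)) % (p * q) :=
    h2.eq_of_abs_lt (by rw [abs_lt]; constructor <;> omega)
  have h4 : (n - r * (a + j * b)) ≡ (n - r * (a + k * b)) [MOD p * q] := h3
  have h5 : ((p * q : ℕ) : ℤ) ∣ ((r : ℤ) * b) * ((j : ℤ) - k) := by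
    have hd := h4.dvd
    have heq : ((n - r * (a + k * b) : ℕ) : ℤ) - ((n - r * (a + j * b) : ℕ) : ℤ)
        = ((r : ℤ) * b) * ((j : ℤ) - k) := by
      rw [Nat.cast_sub hej, Nat.cast_sub hek]; push_cast; ring
    rwa [heq] at hd
  have h6 : (s : ℤ) ∣ (r : ℤ) * ((j : ℤ) - k) := by
    have hb0' : (b : ℤ) ≠ 0 := by exact_mod_cast hb0.ne'
    rw [← hbs] at h5
    push_cast at h5
    have h5' : (b : ℤ) * s ∣ (b : ℤ) * ((r : ℤ) * ((j : ℤ) - k)) := by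
      convert h5 using 1; ring
    exact (mul_dvd_mul_iff_left hb0').mp h5'
  have h7 : (s : ℤ) ∣ ((j : ℤ) - k) := hsr.isCoprime.dvd_of_dvd_mul_left h6
  have h8 : ((j : ℤ) - k) = 0 := Int.eq_zero_of_abs_lt_dvd h7 (by rw [abs_lt]; omega)
  omega

lemma abs_sum_le_one {M : ℕ} (x : ℕ → ℤ)
    (hv : ∀ j, j < M → x j = 1 ∨ x j = 0 ∨ x j = -1)
    (h1 : ∀ j k, j < M → k < M → x j = 1 → x k = 1 → j = k)
    (h2 : ∀ j k, j < M → k < M → x j = -1 → x k = -1 → j = k) :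
    |∑ j ∈ range M, x j| ≤ 1 := by
  classical
  set P := (range M).filter (fun j => x j = 1) with hP
  set Q := (range M).filter (fun j => x j = -1) with hQ
  have key : ∑ j ∈ range M, x j = (P.card : ℤ) - Q.card := by
    rw [← Finset.sum_filter_add_sum_filter_not (range M) (fun j => x j = 1)]
    have e1 : ∑ j ∈ P, x j = (P.card : ℤ) := by
      rw [Finset.sum_congr rfl (fun j hj => (Finset.mem_filter.mp hj).2)]; simp [hP]
    have f1 : ((range M).filter (fun j => ¬ x j = 1)).filter (fun j => x j = -1) = Q := by
      ext a
      simp only [Finset.mem_filter, hQ, Finset.mem_range]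
      constructor
      · rintro ⟨⟨ha, -⟩, hb⟩; exact ⟨ha, hb⟩
      · rintro ⟨ha, hb⟩; exact ⟨⟨ha, by rw [hb]; norm_num⟩, hb⟩
    have e2 : ∑ j ∈ (range M).filter (fun j => ¬ x j = 1), x j = -(Q.card : ℤ) := by
      rw [← Finset.sum_filter_add_sum_filter_not ((range M).filter (fun j => ¬ x j = 1))
        (fun j => x j = -1), f1]
      have e3 : ∑ j ∈ Q, x j = -(Q.card : ℤ) := by
        rw [Finset.sum_congr rfl (fun j hj => (Finset.mem_filter.mp hj).2)]; simp [hQ]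
      have e4 : ∑ j ∈ ((range M).filter (fun j => ¬ x j = 1)).filter (fun j => ¬ x j = -1),
          x j = 0 := by
        apply Finset.sum_eq_zero
        intro a ha
        simp only [Finset.mem_filter, Finset.mem_range] at ha
        rcases hv a ha.1.1 with h | h | h
        · exact absurd h ha.1.2
        · exact h
        · exact absurd h ha.2
      rw [e3, e4, add_zero]
    rw [e1, e2]; ring
  have c1 : P.card ≤ 1 := Finset.card_le_one.mpr (by
    intro a ha b hb
    simp only [hP, Finset.mem_filter, Finset.mem_range] at ha hb
    exact h1 a b ha.1 hb.1 ha.2 hb.2)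
  have c2 : Q.card ≤ 1 := Finset.card_le_one.mpr (by
    intro a ha b hb
    simp only [hQ, Finset.mem_filter, Finset.mem_range] at ha hb
    exact h2 a b ha.1 hb.1 ha.2 hb.2)
  rw [key, abs_le]; constructor <;> omega

lemma bound3 (p q r : ℕ) (hp : p.Prime) (hq : q.Prime) (hp5 : 5 ≤ p)
    (hq2 : q = 2 * p - 1) (hr : r.Prime) (hrq : q < r) (n : ℕ) :
    |cyclCoeff (p * q * r) n| ≤ 3 := by
  have hpq : p < q := by omega
  have hcp : Nat.Coprime p r := (Nat.coprime_primes hp hr).mpr (by omega)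
  have hcq : Nat.Coprime q r := (Nat.coprime_primes hq hr).mpr (by omega)
  rw [coeff_eq p q r hp hq hp5 hq2 hr hrq n]
  set S1 := ∑ j ∈ range (p - 1), cf p q n (r * (j * q)) with hS1
  set S2 := ∑ j ∈ range (p - 1), cf p q n (r * (p + j * q)) with hS2
  set S3 := ∑ t ∈ range (2 * p - 3), cf p q n (r * (1 + t * p)) with hS3
  have b1 : |S1| ≤ 1 := by
    apply abs_sum_le_one
    · intro j _; exact cf_trichotomy p q n _
    · intro j k hj hk hxj hxk
      have cj := cf_one hxj; have ck := cf_one hxk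
      exact uniq_gen (a := 0) (n := n) (w := 0) (mul_comm q p) hpq.le hq.pos hcp (by omega) hj hk
        (by rw [zero_add]; exact cj.1) (by rw [zero_add]; exact ck.1)
        (by rw [zero_add]; exact cj.2) (by rw [zero_add]; exact ck.2)
    · intro j k hj hk hxj hxk
      have cj := cf_negone hxj; have ck := cf_negone hxk
      exact uniq_gen (a := 0) (n := n) (w := q) (mul_comm q p) hpq.le hq.pos hcp (by omega) hj hk
        (by rw [zero_add]; exact cj.1) (by rw [zero_add]; exact ck.1)
        (by rw [zero_add]; exact cj.2) (by rw [zero_add]; exact ck.2)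
  have b2 : |S2| ≤ 1 := by
    apply abs_sum_le_one
    · intro j _; exact cf_trichotomy p q n _
    · intro j k hj hk hxj hxk
      have cj := cf_one hxj; have ck := cf_one hxk
      exact uniq_gen (a := p) (w := 0) (mul_comm q p) hpq.le hq.pos hcp (by omega) hj hk
        cj.1 ck.1 cj.2 ck.2
    · intro j k hj hk hxj hxk
      have cj := cf_negone hxj; have ck := cf_negone hxk
      exact uniq_gen (a := p) (w := q) (mul_comm q p) hpq.le hq.pos hcp (by omega) hj hk
        cj.1 ck.1 cj.2 ck.2
  have b3 : |S3| ≤ 1 := by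
    apply abs_sum_le_one
    · intro j _; exact cf_trichotomy p q n _
    · intro j k hj hk hxj hxk
      have cj := cf_one hxj; have ck := cf_one hxk
      exact uniq_gen (a := 1) (w := 0) (rfl : p * q = p * q) le_rfl hp.pos hcq (by omega) hj hk
        cj.1 ck.1 cj.2 ck.2
    · intro j k hj hk hxj hxk
      have cj := cf_negone hxj; have ck := cf_negone hxk
      exact uniq_gen (a := 1) (w := q) (rfl : p * q = p * q) le_rfl hp.pos hcq (by omega) hj hk
        cj.1 ck.1 cj.2 ck.2
  have t1 : |S1 + S2 - S3| ≤ |S1| + |S2| + |S3| := by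
    calc |S1 + S2 - S3| ≤ |S1 + S2| + |S3| := by
          rw [sub_eq_add_neg]
          exact (abs_add_le _ _).trans (by rw [abs_neg])
      _ ≤ (|S1| + |S2|) + |S3| := by
          have := abs_add_le S1 S2; omega
  omega

lemma coeff_neg3 (m r : ℕ) (hpP : (m + 5).Prime) (hqP : (2 * m + 9).Prime)
    (hr : r.Prime) (hrq : 2 * m + 9 < r)
    (hmod : r ≡ 2 * m + 12 [MOD (m + 5) * (2 * m + 9)]) :
    cyclCoeff ((m + 5) * (2 * m + 9) * r) ((2 * m + 9) * (r + 1)) = -3 := by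
  set n := (2 * m + 9) * (r + 1) with hn
  obtain ⟨K, hK⟩ : ∃ K, (m + 5) * (2 * m + 9) = 2 * K + 19 * m + 45 := ⟨m * m, by ring⟩
  have hq2 : (2 * m + 9 : ℕ) = 2 * (m + 5) - 1 := by omega
  rw [coeff_eq (m + 5) (2 * m + 9) r hpP hqP (by omega) hq2 hr hrq n]
  have hstep : ∀ c w v : ℕ, (2 * m + 12) * c + (2 * m + 9) = w * ((m + 5) * (2 * m + 9)) + v →
      v < (m + 5) * (2 * m + 9) → (r * c + (2 * m + 9)) % ((m + 5) * (2 * m + 9)) = v := by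
    intro c w v hw hv
    have h1 : r * c + (2 * m + 9) ≡ (2 * m + 12) * c + (2 * m + 9)
        [MOD (m + 5) * (2 * m + 9)] := Nat.ModEq.add_right _ (hmod.mul_right c)
    have h2 : (r * c + (2 * m + 9)) % ((m + 5) * (2 * m + 9))
        = ((2 * m + 12) * c + (2 * m + 9)) % ((m + 5) * (2 * m + 9)) := h1
    rw [h2, hw, add_comm, Nat.add_mul_mod_self_right, Nat.mod_eq_of_lt hv]
  have hrn : n = r * (2 * m + 9) + (2 * m + 9) := by rw [hn]; ring
  have hgt : ∀ e : ℕ, n < e → cf (m + 5) (2 * m + 9) n e = 0 := fun e he => by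
    rw [cf, if_neg (by omega)]
  have hr2 : 2 * (2 * m + 9) ≤ r * (2 * m + 9) :=
    Nat.mul_le_mul (by omega) le_rfl
  -- first sum : only j = 1 contributes, with value -1
  have hS1 : ∑ j ∈ range (m + 5 - 1), cf (m + 5) (2 * m + 9) n (r * (j * (2 * m + 9))) = -1 := by
    rw [Finset.sum_eq_single_of_mem 1 (by simp [show m + 5 - 1 = m + 4 from rfl])]
    · have e1 : r * (1 * (2 * m + 9)) ≤ n := by
        have h' : r * (1 * (2 * m + 9)) = r * (2 * m + 9) := by ring
        omega
      have e2 : n - r * (1 * (2 * m + 9)) = 2 * m + 9 := by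
        have h' : r * (1 * (2 * m + 9)) = r * (2 * m + 9) := by ring
        omega
      rw [cf, if_pos e1, e2, dd, Nat.mod_eq_of_lt (by omega),
        if_neg (by omega), if_pos (by omega)]
    · intro b _ hb1
      rcases Nat.eq_zero_or_pos b with rfl | hb0
      · have e0 : r * (0 * (2 * m + 9)) = 0 := by ring
        have emod : n % ((m + 5) * (2 * m + 9)) = 6 * m + 27 := by
          rw [hrn]
          exact hstep (2 * m + 9) 2 (6 * m + 27) (by ring) (by omega)
        rw [cf, if_pos (by omega), e0, Nat.sub_zero, dd, emod,
          if_neg (by omega), if_neg (by omega)]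
      · have hb2 : 2 ≤ b := by omega
        have c1 : r * (2 * (2 * m + 9)) ≤ r * (b * (2 * m + 9)) :=
          Nat.mul_le_mul le_rfl (Nat.mul_le_mul hb2 le_rfl)
        have c2 : r * (2 * (2 * m + 9)) = r * (2 * m + 9) + r * (2 * m + 9) := by ring
        exact hgt _ (by omega)
  -- second sum : only j = 0 contributes, with value -1
  have hS2 : ∑ j ∈ range (m + 5 - 1),
      cf (m + 5) (2 * m + 9) n (r * ((m + 5) + j * (2 * m + 9))) = -1 := by
    rw [Finset.sum_eq_single_of_mem 0 (by simp [show m + 5 - 1 = m + 4 from rfl])]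
    · have h' : r * ((m + 5) + 0 * (2 * m + 9)) = r * (m + 5) := by ring
      have hle : r * (m + 5) ≤ r * (2 * m + 9) := Nat.mul_le_mul le_rfl (by omega)
      have e1 : r * ((m + 5) + 0 * (2 * m + 9)) ≤ n := by omega
      have hsplit : n = (r * (m + 4) + (2 * m + 9)) + r * ((m + 5) + 0 * (2 * m + 9)) := by
        rw [hn]; ring
      have e2 : n - r * ((m + 5) + 0 * (2 * m + 9)) = r * (m + 4) + (2 * m + 9) := by omega
      have emod := hstep (m + 4) 1 (3 * m + 12) (by ring) (by omega)
      rw [cf, if_pos e1, e2, dd, emod, if_neg (by omega), if_pos (by omega)]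
    · intro b _ hb0
      have hb1 : 1 ≤ b := by omega
      have c1 : r * ((m + 5) + 1 * (2 * m + 9)) ≤ r * ((m + 5) + b * (2 * m + 9)) :=
        Nat.mul_le_mul le_rfl (by
          have := Nat.mul_le_mul hb1 (le_refl (2 * m + 9)); omega)
      have c2 : r * ((m + 5) + 1 * (2 * m + 9)) = r * (m + 5) + r * (2 * m + 9) := by ring
      have c3 : r * 1 ≤ r * (m + 5) := Nat.mul_le_mul le_rfl (by omega)
      have c4 : r * 1 = r := by ring
      exact hgt _ (by omega)
  -- third sum : only t = 1 contributes, with value 1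
  have hS3 : ∑ t ∈ range (2 * (m + 5) - 3),
      cf (m + 5) (2 * m + 9) n (r * (1 + t * (m + 5))) = 1 := by
    rw [Finset.sum_eq_single_of_mem 1 (by
      simp [show 2 * (m + 5) - 3 = 2 * m + 7 from by omega])]
    · have h' : r * (1 + 1 * (m + 5)) = r * (m + 6) := by ring
      have hle : r * (m + 6) ≤ r * (2 * m + 9) := Nat.mul_le_mul le_rfl (by omega)
      have e1 : r * (1 + 1 * (m + 5)) ≤ n := by omega
      have hsplit : n = (r * (m + 3) + (2 * m + 9)) + r * (1 + 1 * (m + 5)) := by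
        rw [hn]; ring
      have e2 : n - r * (1 + 1 * (m + 5)) = r * (m + 3) + (2 * m + 9) := by omega
      have emod := hstep (m + 3) 1 m (by ring) (by omega)
      rw [cf, if_pos e1, e2, dd, emod, if_pos (by omega)]
    · intro b _ hb1
      rcases Nat.eq_zero_or_pos b with rfl | hb0
      · have h' : r * (1 + 0 * (m + 5)) = r * 1 := by ring
        have c4 : r * 1 = r := by ring
        have c5 : r * 1 ≤ r * (2 * m + 9) := Nat.mul_le_mul le_rfl (by omega)
        have e1 : r * (1 + 0 * (m + 5)) ≤ n := by omega
        have hsplit : n = (r * (2 * m + 8) + (2 * m + 9)) + r * (1 + 0 * (m + 5)) := by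
          rw [hn]; ring
        have e2 : n - r * (1 + 0 * (m + 5)) = r * (2 * m + 8) + (2 * m + 9) := by omega
        have emod := hstep (2 * m + 8) 2 (4 * m + 15) (by ring) (by omega)
        rw [cf, if_pos e1, e2, dd, emod, if_neg (by omega), if_neg (by omega)]
      · have hb2 : 2 ≤ b := by omega
        have c1 : r * (1 + 2 * (m + 5)) ≤ r * (1 + b * (m + 5)) :=
          Nat.mul_le_mul le_rfl (by
            have := Nat.mul_le_mul hb2 (le_refl (m + 5)); omega)
        have c2 : r * (1 + 2 * (m + 5)) = r * (2 * m + 9) + r * 2 := by ring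
        have c3 : r * 2 = 2 * r := by ring
        exact hgt _ (by omega)
  rw [hS1, hS2, hS3]
  norm_num

/-- if `p ≥ 5` and `q = 2p - 1` are both prime, then `M(p;2p-1) = 3`. -/
theorem stmt19 (p : ℕ) (hp : p.Prime) (hp5 : 5 ≤ p) (hq : (2 * p - 1).Prime) :
    (∀ r k : ℕ, r.Prime → 2 * p - 1 < r → |cyclCoeff (p * (2 * p - 1) * r) k| ≤ 3) ∧
      ∃ r k : ℕ, r.Prime ∧ 2 * p - 1 < r ∧ |cyclCoeff (p * (2 * p - 1) * r) k| = 3 := by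
  constructor
  · intro r k hr hrq
    exact bound3 p (2 * p - 1) r hp hq hp5 rfl hr hrq k
  · haveI : NeZero (p * (2 * p - 1)) := ⟨Nat.mul_ne_zero hp.pos.ne' hq.pos.ne'⟩
    have hcop : Nat.Coprime (2 * p + 2) (p * (2 * p - 1)) := by
      have h1 : ¬ p ∣ 2 * p + 2 := by
        intro h
        have hd : p ∣ 2 * p := ⟨2, by ring⟩
        have h2 : p ∣ 2 := (Nat.dvd_add_right hd).mp h
        have := Nat.le_of_dvd (by norm_num) h2
        omega
      have h2 : ¬ (2 * p - 1) ∣ 2 * p + 2 := by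
        intro h
        have heq : 2 * p + 2 = (2 * p - 1) + 3 := by omega
        rw [heq] at h
        have h3 : (2 * p - 1) ∣ 3 := (Nat.dvd_add_right dvd_rfl).mp h
        have := Nat.le_of_dvd (by norm_num) h3
        omega
      exact Nat.Coprime.mul_right (((Nat.Prime.coprime_iff_not_dvd hp).mpr h1).symm)
        (((Nat.Prime.coprime_iff_not_dvd hq).mpr h2).symm)
    have hunit : IsUnit ((2 * p + 2 : ℕ) : ZMod (p * (2 * p - 1))) :=
      (ZMod.isUnit_iff_coprime _ _).mpr hcop
    obtain ⟨r, hrgt, hrP, hrmod⟩ := Nat.forall_exists_prime_gt_and_eq_mod hunit (2 * p - 1)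
    have hmodn : r ≡ 2 * p + 2 [MOD p * (2 * p - 1)] :=
      (ZMod.natCast_eq_natCast_iff r (2 * p + 2) (p * (2 * p - 1))).mp hrmod
    obtain ⟨m, rfl⟩ : ∃ m, p = m + 5 := ⟨p - 5, by omega⟩
    have hq9 : 2 * (m + 5) - 1 = 2 * m + 9 := by omega
    refine ⟨r, (2 * (m + 5) - 1) * (r + 1), hrP, hrgt, ?_⟩
    rw [hq9]
    have hmod' : r ≡ 2 * m + 12 [MOD (m + 5) * (2 * m + 9)] := by
      have h12 : 2 * (m + 5) + 2 = 2 * m + 12 := by omega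
      rw [← hq9, ← h12]
      exact hmodn
    have hqP : (2 * m + 9).Prime := hq9 ▸ hq
    have hrq' : 2 * m + 9 < r := hq9 ▸ hrgt
    rw [coeff_neg3 m r hp hqP hrP hrq' hmod']
    norm_num
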